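/- arXiv:2201.08914 — 4 statements merged into one kernel-verified Lean document; each statement's English description precedes it below -/
import Mathlib

section
/- Local Lipschitz continuity: there exists C₂ > 0 such that for all vector fields u, w, v with gradients in L³(Ω), ∫_Ω (|∇u|∇u - |∇w|∇w) : ∇v dx ≤ C₂ r ‖∇(u - w)‖_{L³(Ω)} ‖∇v‖_{L³(Ω)}, where r = max{‖∇u‖_{L³(Ω)}, ‖∇w‖_{L³(Ω)}}. -/
open MeasureTheory
noncomputable section

/-- Gradient matrix (∇u)_{ij} = ∂u_i/∂x_j of a vector field. -/
def gradMat {d : ℕ} (u : EuclideanSpace ℝ (Fin d) → EuclideanSpace ℝ (Fin d))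
    (x : EuclideanSpace ℝ (Fin d)) : Fin d → Fin d → ℝ :=
  fun i j => fderiv ℝ (fun y => u y i) x (EuclideanSpace.single j 1)

/-- Frobenius norm of a d×d matrix. -/
def fnorm {d : ℕ} (A : Fin d → Fin d → ℝ) : ℝ := Real.sqrt (∑ i, ∑ j, (A i j)^2)

/-- Frobenius inner product A : B of d×d matrices. -/
def finner {d : ℕ} (A B : Fin d → Fin d → ℝ) : ℝ := ∑ i, ∑ j, A i j * B i j

/-- j-th component of the convective derivative (u·∇)v. -/
def convDeriv {d : ℕ} (u v : EuclideanSpace ℝ (Fin d) → EuclideanSpace ℝ (Fin d))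
    (x : EuclideanSpace ℝ (Fin d)) (j : Fin d) : ℝ :=
  ∑ i, u x i * fderiv ℝ (fun y => v y j) x (EuclideanSpace.single i 1)

/-- Laplacian of a scalar field. -/
def lapS {d : ℕ} (g : EuclideanSpace ℝ (Fin d) → ℝ) (x : EuclideanSpace ℝ (Fin d)) : ℝ :=
  ∑ j, fderiv ℝ (fun y => fderiv ℝ g y (EuclideanSpace.single j 1)) x (EuclideanSpace.single j 1)

/-- L²(Ω) inner product of two vector fields. -/
def ip {d : ℕ} (Ω : Set (EuclideanSpace ℝ (Fin d)))
    (u v : EuclideanSpace ℝ (Fin d) → EuclideanSpace ℝ (Fin d)) : ℝ :=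
  ∫ x in Ω, (inner ℝ (u x) (v x) : ℝ)

/-- L²(Ω) inner product of the gradients of two vector fields. -/
def gip {d : ℕ} (Ω : Set (EuclideanSpace ℝ (Fin d)))
    (u v : EuclideanSpace ℝ (Fin d) → EuclideanSpace ℝ (Fin d)) : ℝ :=
  ∫ x in Ω, finner (gradMat u x) (gradMat v x)

/-- The pairing (u·∇v, w) in L²(Ω). -/
def cform {d : ℕ} (Ω : Set (EuclideanSpace ℝ (Fin d)))
    (u v w : EuclideanSpace ℝ (Fin d) → EuclideanSpace ℝ (Fin d)) : ℝ :=
  ∫ x in Ω, ∑ j, convDeriv u v x j * w x j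

/-- The explicitly skew-symmetrized trilinear form b*(u,v,w). -/
def bstar {d : ℕ} (Ω : Set (EuclideanSpace ℝ (Fin d)))
    (u v w : EuclideanSpace ℝ (Fin d) → EuclideanSpace ℝ (Fin d)) : ℝ :=
  (1/2) * cform Ω u v w - (1/2) * cform Ω u w v


section Aux

open scoped ENNReal

/-- Embed a matrix into Euclidean space indexed by pairs. -/
def toE {d : ℕ} (A : Fin d → Fin d → ℝ) : EuclideanSpace ℝ (Fin d × Fin d) :=
  WithLp.toLp 2 (fun p : Fin d × Fin d => A p.1 p.2)

lemma fnorm_eq_norm {d : ℕ} (A : Fin d → Fin d → ℝ) : fnorm A = ‖toE A‖ := by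
  rw [EuclideanSpace.norm_eq]
  simp [fnorm, toE, Fintype.sum_prod_type, Real.norm_eq_abs, sq_abs]

lemma finner_eq_inner {d : ℕ} (A B : Fin d → Fin d → ℝ) :
    finner A B = (inner ℝ (toE A) (toE B) : ℝ) := by
  simp [finner, toE, PiLp.inner_apply, RCLike.inner_apply, conj_trivial,
    Fintype.sum_prod_type, mul_comm]

lemma key_ineq {E : Type*} [NormedAddCommGroup E] [InnerProductSpace ℝ E] (a b c : E) :
    |(inner ℝ (‖a‖ • a - ‖b‖ • b) c : ℝ)| ≤ 2 * max ‖a‖ ‖b‖ * ‖a - b‖ * ‖c‖ := by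
  have h1 : ‖‖a‖ • a - ‖b‖ • b‖ ≤ 2 * max ‖a‖ ‖b‖ * ‖a - b‖ := by
    have heq : ‖a‖ • a - ‖b‖ • b = ‖a‖ • (a - b) + (‖a‖ - ‖b‖) • b := by
      rw [smul_sub, sub_smul]; abel
    rw [heq]
    calc ‖‖a‖ • (a - b) + (‖a‖ - ‖b‖) • b‖
        ≤ ‖‖a‖ • (a - b)‖ + ‖(‖a‖ - ‖b‖) • b‖ := norm_add_le _ _
      _ = ‖a‖ * ‖a - b‖ + |‖a‖ - ‖b‖| * ‖b‖ := by
          rw [norm_smul, norm_smul, Real.norm_eq_abs, Real.norm_eq_abs,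
            abs_of_nonneg (norm_nonneg a)]
      _ ≤ max ‖a‖ ‖b‖ * ‖a - b‖ + ‖a - b‖ * max ‖a‖ ‖b‖ := by
          gcongr
          · exact le_max_left _ _
          · exact abs_norm_sub_norm_le a b
          · exact le_max_right _ _
      _ = 2 * max ‖a‖ ‖b‖ * ‖a - b‖ := by ring
  calc |(inner ℝ (‖a‖ • a - ‖b‖ • b) c : ℝ)|
      ≤ ‖‖a‖ • a - ‖b‖ • b‖ * ‖c‖ := abs_real_inner_le_norm _ _
    _ ≤ 2 * max ‖a‖ ‖b‖ * ‖a - b‖ * ‖c‖ :=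
        mul_le_mul_of_nonneg_right h1 (norm_nonneg c)

lemma pointwise_bound {d : ℕ} (A B C : Fin d → Fin d → ℝ) :
    |finner (fun i j => fnorm A * A i j - fnorm B * B i j) C| ≤
      2 * max (fnorm A) (fnorm B) * fnorm (fun i j => A i j - B i j) * fnorm C := by
  have h1 : toE (fun i j => fnorm A * A i j - fnorm B * B i j)
      = ‖toE A‖ • toE A - ‖toE B‖ • toE B := by
    ext p
    simp [toE, fnorm_eq_norm, PiLp.smul_apply, PiLp.sub_apply, smul_eq_mul]
  have h2 : toE (fun i j => A i j - B i j) = toE A - toE B := rfl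
  rw [finner_eq_inner, h1, fnorm_eq_norm A, fnorm_eq_norm B, fnorm_eq_norm,
    fnorm_eq_norm, h2]
  exact key_ineq _ _ _

lemma fnorm_sub_le {d : ℕ} (A B : Fin d → Fin d → ℝ) :
    fnorm (fun i j => A i j - B i j) ≤ fnorm A + fnorm B := by
  have h2 : toE (fun i j => A i j - B i j) = toE A - toE B := rfl
  rw [fnorm_eq_norm, fnorm_eq_norm, fnorm_eq_norm, h2]
  exact norm_sub_le _ _

lemma fnorm_nonneg {d : ℕ} (A : Fin d → Fin d → ℝ) : 0 ≤ fnorm A :=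
  Real.sqrt_nonneg _

lemma meas_fnorm {d : ℕ} (A : EuclideanSpace ℝ (Fin d) → Fin d → Fin d → ℝ)
    (hA : ∀ i j, Measurable fun x => A x i j) :
    Measurable fun x => fnorm (A x) := by
  have h : Measurable fun x => ∑ i, ∑ j, (A x i j) ^ 2 :=
    Finset.measurable_sum _ fun i _ =>
      Finset.measurable_sum _ fun j _ => (hA i j).pow_const 2
  exact h.sqrt

lemma meas_entry {d : ℕ} (u : EuclideanSpace ℝ (Fin d) → EuclideanSpace ℝ (Fin d))
    (i j : Fin d) : Measurable fun x => gradMat u x i j :=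
  measurable_fderiv_apply_const ℝ _ _

/-- Triple Hölder inequality with exponents (3,3,3), in lintegral form. -/
lemma holder3 {α : Type*} [MeasurableSpace α] (μ : Measure α) (f g h : α → ℝ)
    (hfm : AEMeasurable f μ) (hgm : AEMeasurable g μ) (hhm : AEMeasurable h μ)
    (hf0 : ∀ x, 0 ≤ f x) (hg0 : ∀ x, 0 ≤ g x) (hh0 : ∀ x, 0 ≤ h x)
    (hf3 : Integrable (fun x => f x ^ 3) μ) (hg3 : Integrable (fun x => g x ^ 3) μ)
    (hh3 : Integrable (fun x => h x ^ 3) μ) :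
    ∫⁻ x, ENNReal.ofReal (f x * g x * h x) ∂μ ≤
      ENNReal.ofReal ((∫ x, f x ^ 3 ∂μ) ^ ((1:ℝ)/3) * (∫ x, g x ^ 3 ∂μ) ^ ((1:ℝ)/3) *
        (∫ x, h x ^ 3 ∂μ) ^ ((1:ℝ)/3)) := by
  have cube : ∀ (r : ℝ), 0 ≤ r → (r ^ 3 : ℝ) ^ ((1:ℝ)/3) = r := by
    intro r hr
    rw [← Real.rpow_natCast r 3, ← Real.rpow_mul hr]
    norm_num
  have key := ENNReal.lintegral_prod_norm_pow_le (μ := μ) Finset.univ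
      (f := ![fun x => ENNReal.ofReal (f x ^ 3), fun x => ENNReal.ofReal (g x ^ 3),
              fun x => ENNReal.ofReal (h x ^ 3)])
      (fun i _ => by
        fin_cases i
        · exact ENNReal.measurable_ofReal.comp_aemeasurable (hfm.pow_const 3)
        · exact ENNReal.measurable_ofReal.comp_aemeasurable (hgm.pow_const 3)
        · exact ENNReal.measurable_ofReal.comp_aemeasurable (hhm.pow_const 3))
      (p := fun _ => (1:ℝ)/3)
      (by norm_num [Fin.sum_univ_three])
      (fun i _ => by norm_num)
  simp only [Fin.prod_univ_three, Matrix.cons_val_zero, Matrix.cons_val_one,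
    Matrix.head_cons, Matrix.cons_val_two, Matrix.tail_cons] at key
  have hL : ∀ x, ENNReal.ofReal (f x ^ 3) ^ ((1:ℝ)/3) * ENNReal.ofReal (g x ^ 3) ^ ((1:ℝ)/3) *
      ENNReal.ofReal (h x ^ 3) ^ ((1:ℝ)/3) = ENNReal.ofReal (f x * g x * h x) := by
    intro x
    rw [ENNReal.ofReal_rpow_of_nonneg (pow_nonneg (hf0 x) 3) (by norm_num),
      ENNReal.ofReal_rpow_of_nonneg (pow_nonneg (hg0 x) 3) (by norm_num),
      ENNReal.ofReal_rpow_of_nonneg (pow_nonneg (hh0 x) 3) (by norm_num),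
      cube _ (hf0 x), cube _ (hg0 x), cube _ (hh0 x),
      ← ENNReal.ofReal_mul (hf0 x), ← ENNReal.ofReal_mul (mul_nonneg (hf0 x) (hg0 x))]
  have hIf : ∫⁻ x, ENNReal.ofReal (f x ^ 3) ∂μ = ENNReal.ofReal (∫ x, f x ^ 3 ∂μ) :=
    (ofReal_integral_eq_lintegral_ofReal hf3
      (Filter.Eventually.of_forall fun x => pow_nonneg (hf0 x) 3)).symm
  have hIg : ∫⁻ x, ENNReal.ofReal (g x ^ 3) ∂μ = ENNReal.ofReal (∫ x, g x ^ 3 ∂μ) :=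
    (ofReal_integral_eq_lintegral_ofReal hg3
      (Filter.Eventually.of_forall fun x => pow_nonneg (hg0 x) 3)).symm
  have hIh : ∫⁻ x, ENNReal.ofReal (h x ^ 3) ∂μ = ENNReal.ofReal (∫ x, h x ^ 3 ∂μ) :=
    (ofReal_integral_eq_lintegral_ofReal hh3
      (Filter.Eventually.of_forall fun x => pow_nonneg (hh0 x) 3)).symm
  have hf3nn : 0 ≤ ∫ x, f x ^ 3 ∂μ :=
    integral_nonneg fun x => pow_nonneg (hf0 x) 3
  have hg3nn : 0 ≤ ∫ x, g x ^ 3 ∂μ :=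
    integral_nonneg fun x => pow_nonneg (hg0 x) 3
  have hh3nn : 0 ≤ ∫ x, h x ^ 3 ∂μ :=
    integral_nonneg fun x => pow_nonneg (hh0 x) 3
  calc ∫⁻ x, ENNReal.ofReal (f x * g x * h x) ∂μ
      = ∫⁻ x, ENNReal.ofReal (f x ^ 3) ^ ((1:ℝ)/3) * ENNReal.ofReal (g x ^ 3) ^ ((1:ℝ)/3) *
          ENNReal.ofReal (h x ^ 3) ^ ((1:ℝ)/3) ∂μ := by
        simp_rw [hL]
    _ ≤ (∫⁻ x, ENNReal.ofReal (f x ^ 3) ∂μ) ^ ((1:ℝ)/3) *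
          (∫⁻ x, ENNReal.ofReal (g x ^ 3) ∂μ) ^ ((1:ℝ)/3) *
          (∫⁻ x, ENNReal.ofReal (h x ^ 3) ∂μ) ^ ((1:ℝ)/3) := key
    _ = ENNReal.ofReal ((∫ x, f x ^ 3 ∂μ) ^ ((1:ℝ)/3) * (∫ x, g x ^ 3 ∂μ) ^ ((1:ℝ)/3) *
          (∫ x, h x ^ 3 ∂μ) ^ ((1:ℝ)/3)) := by
        rw [hIf, hIg, hIh,
          ENNReal.ofReal_rpow_of_nonneg hf3nn (by norm_num),
          ENNReal.ofReal_rpow_of_nonneg hg3nn (by norm_num),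
          ENNReal.ofReal_rpow_of_nonneg hh3nn (by norm_num),
          ← ENNReal.ofReal_mul (Real.rpow_nonneg hf3nn _),
          ← ENNReal.ofReal_mul (mul_nonneg (Real.rpow_nonneg hf3nn _) (Real.rpow_nonneg hg3nn _))]

end Aux

/-- local Lipschitz continuity of the p-Laplacian-type operator with p = 3. -/
theorem stmt5 (d : ℕ) (Ω : Set (EuclideanSpace ℝ (Fin d)))
    (hΩo : IsOpen Ω) (hΩb : Bornology.IsBounded Ω) :
    ∃ C₂ : ℝ, 0 < C₂ ∧
      ∀ u w v : EuclideanSpace ℝ (Fin d) → EuclideanSpace ℝ (Fin d),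
        IntegrableOn (fun x => fnorm (gradMat u x)^3) Ω volume →
        IntegrableOn (fun x => fnorm (gradMat w x)^3) Ω volume →
        IntegrableOn (fun x => fnorm (gradMat v x)^3) Ω volume →
        IntegrableOn (fun x =>
          finner (fun i j => fnorm (gradMat u x) * gradMat u x i j
                             - fnorm (gradMat w x) * gradMat w x i j)
                 (gradMat v x)) Ω volume →
        (∫ x in Ω,
            finner (fun i j => fnorm (gradMat u x) * gradMat u x i j
                               - fnorm (gradMat w x) * gradMat w x i j)
                   (gradMat v x)) ≤
          C₂ * max ((∫ x in Ω, fnorm (gradMat u x)^3) ^ ((1:ℝ)/3))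
                   ((∫ x in Ω, fnorm (gradMat w x)^3) ^ ((1:ℝ)/3)) *
            (∫ x in Ω, fnorm (fun i j => gradMat u x i j - gradMat w x i j)^3) ^ ((1:ℝ)/3) *
            (∫ x in Ω, fnorm (gradMat v x)^3) ^ ((1:ℝ)/3) := by
  classical
  refine ⟨2 * 2 ^ ((1:ℝ)/3), by positivity, ?_⟩
  intro u w v hu3 hw3 hv3 hφ
  set μ := volume.restrict Ω with hμ
  -- abbreviations
  set fA : EuclideanSpace ℝ (Fin d) → ℝ := fun x => fnorm (gradMat u x) with hfA
  set fB : EuclideanSpace ℝ (Fin d) → ℝ := fun x => fnorm (gradMat w x) with hfB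
  set fC : EuclideanSpace ℝ (Fin d) → ℝ := fun x => fnorm (gradMat v x) with hfC
  set fD : EuclideanSpace ℝ (Fin d) → ℝ :=
    fun x => fnorm (fun i j => gradMat u x i j - gradMat w x i j) with hfD
  set fM : EuclideanSpace ℝ (Fin d) → ℝ := fun x => max (fA x) (fB x) with hfM
  set φ : EuclideanSpace ℝ (Fin d) → ℝ := fun x =>
    finner (fun i j => fnorm (gradMat u x) * gradMat u x i j
      - fnorm (gradMat w x) * gradMat w x i j) (gradMat v x) with hφdef
  -- measurability
  have hmA : Measurable fA := meas_fnorm _ (fun i j => meas_entry u i j)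
  have hmB : Measurable fB := meas_fnorm _ (fun i j => meas_entry w i j)
  have hmC : Measurable fC := meas_fnorm _ (fun i j => meas_entry v i j)
  have hmD : Measurable fD :=
    meas_fnorm _ (fun i j => (meas_entry u i j).sub (meas_entry w i j))
  have hmM : Measurable fM := hmA.max hmB
  -- nonnegativity
  have h0A : ∀ x, 0 ≤ fA x := fun x => fnorm_nonneg _
  have h0B : ∀ x, 0 ≤ fB x := fun x => fnorm_nonneg _
  have h0C : ∀ x, 0 ≤ fC x := fun x => fnorm_nonneg _
  have h0D : ∀ x, 0 ≤ fD x := fun x => fnorm_nonneg _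
  have h0M : ∀ x, 0 ≤ fM x := fun x => le_trans (h0A x) (le_max_left _ _)
  -- pointwise bound
  have hpt : ∀ x, |φ x| ≤ 2 * fM x * fD x * fC x := fun x =>
    pointwise_bound (gradMat u x) (gradMat w x) (gradMat v x)
  -- integrability of fM^3 and fD^3
  have hAB3 : Integrable (fun x => fA x ^ 3 + fB x ^ 3) μ := hu3.add hw3
  have hM3 : Integrable (fun x => fM x ^ 3) μ := by
    refine hAB3.mono' ((hmM.pow_const 3).aestronglyMeasurable) ?_
    refine Filter.Eventually.of_forall fun x => ?_
    rw [Real.norm_eq_abs, abs_of_nonneg (pow_nonneg (h0M x) 3)]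
    rcases le_total (fA x) (fB x) with h | h
    · rw [hfM]; simp only [max_eq_right h]
      nlinarith [pow_nonneg (h0A x) 3]
    · rw [hfM]; simp only [max_eq_left h]
      nlinarith [pow_nonneg (h0B x) 3]
  have hD3 : Integrable (fun x => fD x ^ 3) μ := by
    have h4 : Integrable (fun x => 4 * (fA x ^ 3 + fB x ^ 3)) μ := hAB3.const_mul 4
    refine h4.mono' ((hmD.pow_const 3).aestronglyMeasurable) ?_
    refine Filter.Eventually.of_forall fun x => ?_
    rw [Real.norm_eq_abs, abs_of_nonneg (pow_nonneg (h0D x) 3)]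
    have htri : fD x ≤ fA x + fB x := fnorm_sub_le _ _
    have hcube : fD x ^ 3 ≤ (fA x + fB x) ^ 3 := pow_le_pow_left₀ (h0D x) htri 3
    nlinarith [mul_nonneg (add_nonneg (h0A x) (h0B x)) (sq_nonneg (fA x - fB x))]
  -- the three L³ integrals
  set IA : ℝ := ∫ x, fA x ^ 3 ∂μ with hIA
  set IB : ℝ := ∫ x, fB x ^ 3 ∂μ with hIB
  set IC : ℝ := ∫ x, fC x ^ 3 ∂μ with hIC
  set ID : ℝ := ∫ x, fD x ^ 3 ∂μ with hID
  set IM : ℝ := ∫ x, fM x ^ 3 ∂μ with hIM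
  have hIAnn : 0 ≤ IA := integral_nonneg fun x => pow_nonneg (h0A x) 3
  have hIBnn : 0 ≤ IB := integral_nonneg fun x => pow_nonneg (h0B x) 3
  have hICnn : 0 ≤ IC := integral_nonneg fun x => pow_nonneg (h0C x) 3
  have hIDnn : 0 ≤ ID := integral_nonneg fun x => pow_nonneg (h0D x) 3
  have hIMnn : 0 ≤ IM := integral_nonneg fun x => pow_nonneg (h0M x) 3
  set P : ℝ := IM ^ ((1:ℝ)/3) * ID ^ ((1:ℝ)/3) * IC ^ ((1:ℝ)/3) with hP
  have hPnn : 0 ≤ P := by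
    refine mul_nonneg (mul_nonneg ?_ ?_) ?_ <;> exact Real.rpow_nonneg (by assumption) _
  -- main lintegral estimate
  have hlin : ∫⁻ x, ENNReal.ofReal |φ x| ∂μ ≤ ENNReal.ofReal (2 * P) := by
    calc ∫⁻ x, ENNReal.ofReal |φ x| ∂μ
        ≤ ∫⁻ x, ENNReal.ofReal 2 * ENNReal.ofReal (fM x * fD x * fC x) ∂μ := by
          refine lintegral_mono fun x => ?_
          rw [← ENNReal.ofReal_mul (by norm_num)]
          exact ENNReal.ofReal_le_ofReal ((hpt x).trans_eq (by ring))
      _ = ENNReal.ofReal 2 * ∫⁻ x, ENNReal.ofReal (fM x * fD x * fC x) ∂μ :=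
          lintegral_const_mul' _ _ (by simp)
      _ ≤ ENNReal.ofReal 2 * ENNReal.ofReal P := by
          refine mul_le_mul_right ?_ _
          exact holder3 μ fM fD fC hmM.aemeasurable hmD.aemeasurable hmC.aemeasurable
            h0M h0D h0C hM3 hD3 hv3
      _ = ENNReal.ofReal (2 * P) := (ENNReal.ofReal_mul (by norm_num)).symm
  -- comparison of IM with max
  have hIMle : IM ^ ((1:ℝ)/3) ≤ 2 ^ ((1:ℝ)/3) * max (IA ^ ((1:ℝ)/3)) (IB ^ ((1:ℝ)/3)) := by
    have h1 : IM ≤ IA + IB := by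
      rw [hIA, hIB, ← integral_add hu3 hw3]
      refine integral_mono hM3 hAB3 fun x => ?_
      rcases le_total (fA x) (fB x) with h | h
      · simp only [hfM, max_eq_right h]; nlinarith [pow_nonneg (h0A x) 3]
      · simp only [hfM, max_eq_left h]; nlinarith [pow_nonneg (h0B x) 3]
    have h2 : IA + IB ≤ 2 * max IA IB := by
      rcases le_total IA IB with h | h
      · rw [max_eq_right h]; linarith
      · rw [max_eq_left h]; linarith
    have h3 : IM ^ ((1:ℝ)/3) ≤ (2 * max IA IB) ^ ((1:ℝ)/3) :=
      Real.rpow_le_rpow hIMnn (h1.trans h2) (by norm_num)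
    have h4 : (2 * max IA IB : ℝ) ^ ((1:ℝ)/3)
        = 2 ^ ((1:ℝ)/3) * (max IA IB) ^ ((1:ℝ)/3) :=
      Real.mul_rpow (by norm_num) (le_max_of_le_left hIAnn)
    have h5 : (max IA IB : ℝ) ^ ((1:ℝ)/3) = max (IA ^ ((1:ℝ)/3)) (IB ^ ((1:ℝ)/3)) := by
      rcases le_total IA IB with h | h
      · rw [max_eq_right h, max_eq_right (Real.rpow_le_rpow hIAnn h (by norm_num))]
      · rw [max_eq_left h, max_eq_left (Real.rpow_le_rpow hIBnn h (by norm_num))]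
    rw [← h5, ← h4]; exact h3
  -- put it together
  have hint : ∫ x, φ x ∂μ ≤ 2 * P := by
    calc ∫ x, φ x ∂μ ≤ |∫ x, φ x ∂μ| := le_abs_self _
      _ ≤ ∫ x, |φ x| ∂μ := by
          simpa [Real.norm_eq_abs] using norm_integral_le_integral_norm (μ := μ) φ
      _ = (∫⁻ x, ENNReal.ofReal |φ x| ∂μ).toReal :=
          integral_eq_lintegral_of_nonneg_ae (Filter.Eventually.of_forall fun x => abs_nonneg _)
            hφ.abs.1
      _ ≤ (ENNReal.ofReal (2 * P)).toReal := ENNReal.toReal_mono ENNReal.ofReal_ne_top hlin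
      _ = 2 * P := ENNReal.toReal_ofReal (by positivity)
  have hfin : 2 * P ≤ 2 * 2 ^ ((1:ℝ)/3) * max (IA ^ ((1:ℝ)/3)) (IB ^ ((1:ℝ)/3)) *
      ID ^ ((1:ℝ)/3) * IC ^ ((1:ℝ)/3) := by
    calc 2 * P = (2 * IM ^ ((1:ℝ)/3)) * ID ^ ((1:ℝ)/3) * IC ^ ((1:ℝ)/3) := by rw [hP]; ring
      _ ≤ (2 * (2 ^ ((1:ℝ)/3) * max (IA ^ ((1:ℝ)/3)) (IB ^ ((1:ℝ)/3)))) *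
            ID ^ ((1:ℝ)/3) * IC ^ ((1:ℝ)/3) := by
          refine mul_le_mul_of_nonneg_right (mul_le_mul_of_nonneg_right ?_
            (Real.rpow_nonneg hIDnn _)) (Real.rpow_nonneg hICnn _)
          linarith [hIMle]
      _ = 2 * 2 ^ ((1:ℝ)/3) * max (IA ^ ((1:ℝ)/3)) (IB ^ ((1:ℝ)/3)) *
            ID ^ ((1:ℝ)/3) * IC ^ ((1:ℝ)/3) := by ring
  exact hint.trans hfin
end
end

section
/- Pointwise monotonicity inequality underlying strong monotonicity: for all vectors (or matrices) a, b in a finite-dimensional inner product space, (|a|a - |b|b) · (a - b) ≥ (1/4)|a - b|³ (in particular the left-hand side is nonnegative). -/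
/-- pointwise monotonicity: (|a|a - |b|b)·(a-b) ≥ (1/4)|a-b|³. -/
theorem stmt6 {n : ℕ} (a b : EuclideanSpace ℝ (Fin n)) :
    (1/4) * ‖a - b‖^3 ≤ (inner ℝ (‖a‖ • a - ‖b‖ • b) (a - b) : ℝ) := by
  have h1 : (inner ℝ (‖a‖ • a - ‖b‖ • b) (a - b) : ℝ)
      = ‖a‖^3 + ‖b‖^3 - (‖a‖ + ‖b‖) * (inner ℝ a b : ℝ) := by
    rw [inner_sub_left, inner_sub_right, inner_sub_right, real_inner_smul_left,
      real_inner_smul_left, real_inner_smul_left, real_inner_smul_left,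
      real_inner_self_eq_norm_sq, real_inner_self_eq_norm_sq, real_inner_comm b a]
    ring
  have h2 : ‖a - b‖^2 = ‖a‖^2 + ‖b‖^2 - 2 * (inner ℝ a b : ℝ) := by
    rw [norm_sub_sq_real]; ring
  have h3 : ‖a - b‖ ≤ ‖a‖ + ‖b‖ := norm_sub_le _ _
  have h4 : (0:ℝ) ≤ ‖a - b‖ := norm_nonneg _
  have h5 : (0:ℝ) ≤ (‖a‖ + ‖b‖) * (‖a‖ - ‖b‖)^2 :=
    mul_nonneg (by positivity) (sq_nonneg _)
  have h6 : (0:ℝ) ≤ ‖a - b‖^2 * (‖a‖ + ‖b‖ - ‖a - b‖) :=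
    mul_nonneg (sq_nonneg _) (by linarith)
  nlinarith [sq_nonneg (‖a‖ - ‖b‖), norm_nonneg a, norm_nonneg b]
end

section
/- Uniform-in-time stability for the modified Smagorinsky model: any strong solution w satisfies ‖w(T)‖² + (C_s⁴δ²/μ²)‖∇w(T)‖² ≤ e^{-αT}[‖w(0)‖² + (C_s⁴δ²/μ²)‖∇w(0)‖²] + (C/α)(1 - e^{-αT}), where α = min{ν/(2C_{PF}²), μ²ν/(C_s⁴δ²)} and C = (2/ν)C_{PF}² sup_t ‖f‖². -/
open MeasureTheory
noncomputable section

lemma gron_aux (a c : ℝ) (ha : 0 < a) (y y' : ℝ → ℝ)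
    (hy : ∀ t, HasDerivAt y (y' t) t)
    (hle : ∀ t, y' t + a * y t ≤ c) :
    ∀ T : ℝ, 0 ≤ T →
      y T ≤ Real.exp (-(a * T)) * y 0 + (c / a) * (1 - Real.exp (-(a * T))) := by
  intro T hT
  set g : ℝ → ℝ := fun t => Real.exp (a * t) * (y t - c / a) with hg
  have hg' : ∀ t, HasDerivAt g (Real.exp (a * t) * (y' t + a * y t - c)) t := by
    intro t
    have h1 : HasDerivAt (fun t : ℝ => Real.exp (a * t)) (Real.exp (a * t) * a) t := by
      simpa using ((hasDerivAt_id t).const_mul a).exp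
    have := h1.mul ((hy t).sub_const (c / a))
    refine this.congr_deriv ?_
    field_simp
    ring
  have hanti : AntitoneOn g (Set.Icc 0 T) := by
    apply antitoneOn_of_deriv_nonpos (convex_Icc 0 T)
    · exact fun s _ => ((hg' s).continuousAt).continuousWithinAt
    · exact fun s _ => ((hg' s).differentiableAt).differentiableWithinAt
    · intro s _
      rw [(hg' s).deriv]
      have := hle s
      have he : (0:ℝ) < Real.exp (a * s) := Real.exp_pos _
      nlinarith
  have hT0 : g T ≤ g 0 := hanti (Set.left_mem_Icc.2 hT) (Set.right_mem_Icc.2 hT) hT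
  have hg0 : g 0 = y 0 - c / a := by simp [hg]
  have hkey : y T - c / a = Real.exp (-(a * T)) * g T := by
    simp only [hg]
    rw [← mul_assoc, ← Real.exp_add]
    simp
  have h2 : Real.exp (-(a * T)) * g T ≤ Real.exp (-(a * T)) * (y 0 - c / a) :=
    mul_le_mul_of_nonneg_left (hg0 ▸ hT0) (Real.exp_nonneg _)
  have h3 : Real.exp (-(a * T)) * (y 0 - c / a)
      = Real.exp (-(a * T)) * y 0 + (c / a) * (1 - Real.exp (-(a * T))) - c / a := by ring
  linarith [hkey ▸ h2]

/-- uniform-in-time stability for the modified Smagorinsky model.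
The energy equality (assumed, as the context permits) is stated as a derivative identity
for y(t) = ‖w(t)‖² + (C_s⁴δ²/μ²)‖∇w(t)‖². -/
theorem stmt9 (d : ℕ) (Ω : Set (EuclideanSpace ℝ (Fin d)))
    (hΩo : IsOpen Ω) (hΩb : Bornology.IsBounded Ω)
    (ν Cs δ μ CPF : ℝ) (hν : 0 < ν) (hCs : 0 < Cs) (hδ : 0 < δ) (hμ : 0 < μ) (hCPF : 0 < CPF)
    (w : ℝ → EuclideanSpace ℝ (Fin d) → EuclideanSpace ℝ (Fin d))
    (f : EuclideanSpace ℝ (Fin d) → EuclideanSpace ℝ (Fin d))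
    (y : ℝ → ℝ)
    (hy : ∀ t, y t = (∫ x in Ω, ‖w t x‖^2)
        + (Cs^4 * δ^2 / μ^2) * ∫ x in Ω, fnorm (gradMat (w t) x)^2)
    -- the energy equality (1/2)y' + ν‖∇w‖² + (C_sδ)²‖∇w‖³_{L³} = (f,w):
    (hE : ∀ t, HasDerivAt y
      (2 * ((∫ x in Ω, (inner ℝ (f x) (w t x) : ℝ))
        - ν * (∫ x in Ω, fnorm (gradMat (w t) x)^2)
        - (Cs*δ)^2 * ∫ x in Ω, fnorm (gradMat (w t) x)^3)) t)
    -- Poincaré–Friedrichs: ‖w‖ ≤ C_{PF} ‖∇w‖: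
    (hP : ∀ t, (∫ x in Ω, ‖w t x‖^2) ≤ CPF^2 * ∫ x in Ω, fnorm (gradMat (w t) x)^2)
    (hintw : ∀ t, IntegrableOn (fun x => ‖w t x‖^2) Ω volume)
    (hintg : ∀ t, IntegrableOn (fun x => fnorm (gradMat (w t) x)^2) Ω volume)
    (hintf : IntegrableOn (fun x => ‖f x‖^2) Ω volume)
    (hintfw : ∀ t, IntegrableOn (fun x => (inner ℝ (f x) (w t x) : ℝ)) Ω volume)
    (α C : ℝ)
    (hα : α = min (ν / (2 * CPF^2)) (μ^2 * ν / (Cs^4 * δ^2)))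
    (hC : C = (2 / ν) * CPF^2 * ∫ x in Ω, ‖f x‖^2) :
    ∀ T : ℝ, 0 ≤ T →
      y T ≤ Real.exp (-(α * T)) * y 0 + (C / α) * (1 - Real.exp (-(α * T))) := by
  have hα1 : α ≤ ν / (2 * CPF^2) := hα ▸ min_le_left _ _
  have hα2 : α ≤ μ^2 * ν / (Cs^4 * δ^2) := hα ▸ min_le_right _ _
  have hαpos : 0 < α := by
    rw [hα]
    exact lt_min (by positivity) (by positivity)
  apply gron_aux α C hαpos y
    (fun t => 2 * ((∫ x in Ω, (inner ℝ (f x) (w t x) : ℝ))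
        - ν * (∫ x in Ω, fnorm (gradMat (w t) x)^2)
        - (Cs*δ)^2 * ∫ x in Ω, fnorm (gradMat (w t) x)^3)) hE
  intro t
  set A := ∫ x in Ω, ‖w t x‖^2 with hA
  set B := ∫ x in Ω, fnorm (gradMat (w t) x)^2 with hB
  set Q := ∫ x in Ω, fnorm (gradMat (w t) x)^3 with hQ
  set F := ∫ x in Ω, ‖f x‖^2 with hF
  set P := ∫ x in Ω, (inner ℝ (f x) (w t x) : ℝ) with hPdef
  have hQnn : 0 ≤ Q :=
    setIntegral_nonneg hΩo.measurableSet (fun x _ => pow_nonneg (Real.sqrt_nonneg _) 3)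
  have hAnn : 0 ≤ A := setIntegral_nonneg hΩo.measurableSet (fun x _ => by positivity)
  have hBnn : 0 ≤ B := setIntegral_nonneg hΩo.measurableSet (fun x _ => by positivity)
  have hFnn : 0 ≤ F := setIntegral_nonneg hΩo.measurableSet (fun x _ => by positivity)
  -- Cauchy–Schwarz + Young pointwise with ε = ν/(2 CPF²)
  have hPest : P ≤ (ν / (4 * CPF^2)) * A + (CPF^2 / ν) * F := by
    have hint2 : IntegrableOn
        (fun x => (ν / (4 * CPF^2)) * ‖w t x‖^2 + (CPF^2 / ν) * ‖f x‖^2) Ω volume :=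
      ((hintw t).const_mul _).add (hintf.const_mul _)
    have := setIntegral_mono_on (hintfw t) hint2 hΩo.measurableSet (fun x _ => by
      have h1 : (inner ℝ (f x) (w t x) : ℝ) ≤ ‖f x‖ * ‖w t x‖ := real_inner_le_norm _ _
      have h2 : (0:ℝ) ≤ ‖f x‖ := norm_nonneg _
      have h3 : (0:ℝ) ≤ ‖w t x‖ := norm_nonneg _
      have h4 : (ν / (4 * CPF^2)) * ‖w t x‖^2 + (CPF^2 / ν) * ‖f x‖^2 - ‖f x‖ * ‖w t x‖
          = (ν * ‖w t x‖ - 2 * CPF^2 * ‖f x‖)^2 / (4 * CPF^2 * ν) := by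
        field_simp
        ring
      have h5 : (0:ℝ) ≤ (ν * ‖w t x‖ - 2 * CPF^2 * ‖f x‖)^2 / (4 * CPF^2 * ν) := by positivity
      linarith)
    calc P ≤ ∫ x in Ω, ((ν / (4 * CPF^2)) * ‖w t x‖^2 + (CPF^2 / ν) * ‖f x‖^2) := this
      _ = (ν / (4 * CPF^2)) * A + (CPF^2 / ν) * F := by
          rw [integral_add ((hintw t).const_mul _) (hintf.const_mul _),
            integral_const_mul, integral_const_mul]
  have hPo : A ≤ CPF^2 * B := hP t
  have hα2' : α * (Cs^4 * δ^2 / μ^2) ≤ ν := by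
    have key : (μ^2 * ν / (Cs^4 * δ^2)) * (Cs^4 * δ^2 / μ^2) = ν := by field_simp
    calc α * (Cs^4 * δ^2 / μ^2) ≤ (μ^2 * ν / (Cs^4 * δ^2)) * (Cs^4 * δ^2 / μ^2) :=
          mul_le_mul_of_nonneg_right hα2 (by positivity)
      _ = ν := key
  have hα1' : α * CPF^2 ≤ ν / 2 := by
    rw [le_div_iff₀ (by positivity)] at hα1
    linarith [hα1]
  rw [hy t, hC]
  have hcsq : 0 ≤ (Cs*δ)^2 * Q := by positivity
  have hνA : (ν / (4 * CPF^2)) * A ≤ (ν/4) * B := by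
    have := mul_le_mul_of_nonneg_left hPo (le_of_lt (by positivity : (0:ℝ) < ν / (4 * CPF^2)))
    calc (ν / (4 * CPF^2)) * A ≤ (ν / (4 * CPF^2)) * (CPF^2 * B) := this
      _ = (ν/4) * B := by field_simp
  have hαA : α * A ≤ (ν/2) * B := by
    have h1 : α * A ≤ α * (CPF^2 * B) := mul_le_mul_of_nonneg_left hPo hαpos.le
    have h2 : α * (CPF^2 * B) ≤ (ν/2) * B := by
      rw [← mul_assoc]
      exact mul_le_mul_of_nonneg_right (by linarith) hBnn
    linarith
  have hαB : α * ((Cs^4 * δ^2 / μ^2) * B) ≤ ν * B := by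
    rw [← mul_assoc]
    exact mul_le_mul_of_nonneg_right hα2' hBnn
  have hCF : (2 / ν) * CPF^2 * F = 2 * ((CPF^2 / ν) * F) := by ring
  have hdist : α * (A + (Cs^4 * δ^2 / μ^2) * B) = α * A + α * ((Cs^4 * δ^2 / μ^2) * B) := by ring
  linarith [hPest, hνA, hαA, hαB, hcsq, hFnn]
end
end

section
/- Time-averaged dissipation bound for the modified Smagorinsky model: for any strong solution w, (1/(|Ω|T)) ∫₀ᵀ [(ν/2)‖∇w‖² + (C_sδ)²‖∇w‖³_{L³}] dt ≤ (1/(|Ω|T)) ∫₀ᵀ (C_{PF}²/(2ν))‖f‖² dt + O(1/T), where the O(1/T) term is (1/(2|Ω|T))[‖w(0)‖² + (C_s⁴δ²/μ²)‖∇w(0)‖²]. -/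
open MeasureTheory
noncomputable section

/-- time-averaged dissipation bound for the modified Smagorinsky model.
y(t) = ‖w(t)‖² + (C_s⁴δ²/μ²)‖∇w(t)‖² and the energy equality is assumed as a derivative
identity (as the context permits). -/
theorem stmt19 (d : ℕ) (Ω : Set (EuclideanSpace ℝ (Fin d)))
    (hΩo : IsOpen Ω) (hΩb : Bornology.IsBounded Ω) (hΩpos : 0 < (volume Ω).toReal)
    (ν Cs δ μ CPF T : ℝ)
    (hν : 0 < ν) (hCs : 0 < Cs) (hδ : 0 < δ) (hμ : 0 < μ) (hCPF : 0 < CPF) (hT : 0 < T)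
    (w : ℝ → EuclideanSpace ℝ (Fin d) → EuclideanSpace ℝ (Fin d))
    (f : EuclideanSpace ℝ (Fin d) → EuclideanSpace ℝ (Fin d))
    (y : ℝ → ℝ)
    (hy : ∀ t, y t = (∫ x in Ω, ‖w t x‖^2)
        + (Cs^4 * δ^2 / μ^2) * ∫ x in Ω, fnorm (gradMat (w t) x)^2)
    -- the energy equality (1/2)y' + ν‖∇w‖² + (C_sδ)²‖∇w‖³_{L³} = (f,w):
    (hE : ∀ t, HasDerivAt y
      (2 * ((∫ x in Ω, (inner ℝ (f x) (w t x) : ℝ))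
        - ν * (∫ x in Ω, fnorm (gradMat (w t) x)^2)
        - (Cs*δ)^2 * ∫ x in Ω, fnorm (gradMat (w t) x)^3)) t)
    (hderint : IntervalIntegrable (fun t =>
      2 * ((∫ x in Ω, (inner ℝ (f x) (w t x) : ℝ))
        - ν * (∫ x in Ω, fnorm (gradMat (w t) x)^2)
        - (Cs*δ)^2 * ∫ x in Ω, fnorm (gradMat (w t) x)^3)) volume 0 T)
    (htint2 : IntervalIntegrable (fun t => ∫ x in Ω, fnorm (gradMat (w t) x)^2) volume 0 T)
    (htint3 : IntervalIntegrable (fun t => ∫ x in Ω, fnorm (gradMat (w t) x)^3) volume 0 T)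
    (htintfw : IntervalIntegrable (fun t => ∫ x in Ω, (inner ℝ (f x) (w t x) : ℝ)) volume 0 T)
    -- Poincaré–Friedrichs: ‖w‖ ≤ C_{PF} ‖∇w‖:
    (hP : ∀ t, (∫ x in Ω, ‖w t x‖^2) ≤ CPF^2 * ∫ x in Ω, fnorm (gradMat (w t) x)^2)
    (hintw : ∀ t, IntegrableOn (fun x => ‖w t x‖^2) Ω volume)
    (hintg : ∀ t, IntegrableOn (fun x => fnorm (gradMat (w t) x)^2) Ω volume)
    (hintf : IntegrableOn (fun x => ‖f x‖^2) Ω volume)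
    (hintfw : ∀ t, IntegrableOn (fun x => (inner ℝ (f x) (w t x) : ℝ)) Ω volume) :
    (1 / ((volume Ω).toReal * T)) * ∫ t in (0:ℝ)..T,
        ((ν/2) * (∫ x in Ω, fnorm (gradMat (w t) x)^2)
          + (Cs*δ)^2 * ∫ x in Ω, fnorm (gradMat (w t) x)^3)
      ≤ (1 / ((volume Ω).toReal * T)) * (∫ t in (0:ℝ)..T,
            (CPF^2 / (2*ν)) * ∫ x in Ω, ‖f x‖^2)
        + (1 / (2 * (volume Ω).toReal * T)) * y 0 := by
  set G2 : ℝ → ℝ := fun t => ∫ x in Ω, fnorm (gradMat (w t) x)^2 with hG2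
  set G3 : ℝ → ℝ := fun t => ∫ x in Ω, fnorm (gradMat (w t) x)^3 with hG3
  set F : ℝ → ℝ := fun t => ∫ x in Ω, (inner ℝ (f x) (w t x) : ℝ) with hF
  set K : ℝ := (CPF^2 / (2*ν)) * ∫ x in Ω, ‖f x‖^2 with hK
  set c : ℝ := (Cs*δ)^2 with hc
  -- pointwise-in-time bound on F
  have hFbound : ∀ t, F t ≤ (ν/2) * G2 t + K := by
    intro t
    set a : ℝ := ν / CPF^2 with ha
    have hapos : 0 < a := div_pos hν (by positivity)
    have hpt : ∀ x : EuclideanSpace ℝ (Fin d),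
        (inner ℝ (f x) (w t x) : ℝ) ≤ (a/2) * ‖w t x‖^2 + (1/(2*a)) * ‖f x‖^2 := by
      intro x
      have h1 : (inner ℝ (f x) (w t x) : ℝ) ≤ ‖f x‖ * ‖w t x‖ := real_inner_le_norm _ _
      have heq : (a/2) * ‖w t x‖^2 + (1/(2*a)) * ‖f x‖^2
          = (a^2 * ‖w t x‖^2 + ‖f x‖^2) / (2*a) := by
        field_simp
      rw [heq, le_div_iff₀ (by positivity)]
      nlinarith [sq_nonneg (a * ‖w t x‖ - ‖f x‖), norm_nonneg (f x), norm_nonneg (w t x)]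
    have hint : Integrable (fun x => (a/2) * ‖w t x‖^2 + (1/(2*a)) * ‖f x‖^2)
        (volume.restrict Ω) := ((hintw t).const_mul _).add (hintf.const_mul _)
    have h2 : F t ≤ (a/2) * (∫ x in Ω, ‖w t x‖^2) + (1/(2*a)) * ∫ x in Ω, ‖f x‖^2 := by
      have := MeasureTheory.integral_mono (hintfw t) hint hpt
      rwa [MeasureTheory.integral_add ((hintw t).const_mul _) (hintf.const_mul _),
        MeasureTheory.integral_const_mul, MeasureTheory.integral_const_mul] at this
    have h3 : (a/2) * (∫ x in Ω, ‖w t x‖^2) ≤ (a/2) * (CPF^2 * G2 t) := by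
      apply mul_le_mul_of_nonneg_left (hP t) (by positivity)
    have hKa : (1/(2*a)) = CPF^2/(2*ν) := by
      rw [ha]; field_simp
    calc F t ≤ (a/2) * (CPF^2 * G2 t) + (1/(2*a)) * ∫ x in Ω, ‖f x‖^2 := by linarith
      _ = (ν/2) * G2 t + K := by rw [hKa, ha, hK]; field_simp
  -- integrate the energy equality
  have hftc : y T - y 0 = ∫ t in (0:ℝ)..T, 2 * (F t - ν * G2 t - c * G3 t) :=
    (intervalIntegral.integral_eq_sub_of_hasDerivAt (fun t _ => hE t) hderint).symm
  -- expand by linearity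
  have hlin : ∫ t in (0:ℝ)..T, 2 * (F t - ν * G2 t - c * G3 t)
      = 2 * (∫ t in (0:ℝ)..T, F t) - 2*ν * (∫ t in (0:ℝ)..T, G2 t)
        - 2*c * (∫ t in (0:ℝ)..T, G3 t) := by
    have : (fun t => 2 * (F t - ν * G2 t - c * G3 t))
        = fun t => (2 * F t - (2*ν) * G2 t) - (2*c) * G3 t := by funext t; ring
    rw [this, intervalIntegral.integral_sub
        ((htintfw.const_mul 2).sub (htint2.const_mul (2*ν))) (htint3.const_mul (2*c)),
      intervalIntegral.integral_sub (htintfw.const_mul 2) (htint2.const_mul (2*ν)),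
      intervalIntegral.integral_const_mul, intervalIntegral.integral_const_mul,
      intervalIntegral.integral_const_mul]
  -- bound ∫ F
  have hIF : (∫ t in (0:ℝ)..T, F t) ≤ (∫ t in (0:ℝ)..T, ((ν/2) * G2 t + K)) := by
    apply intervalIntegral.integral_mono_on hT.le htintfw
      ((htint2.const_mul _).add (intervalIntegrable_const))
    intro t _; exact hFbound t
  have hIFval : (∫ t in (0:ℝ)..T, ((ν/2) * G2 t + K))
      = (ν/2) * (∫ t in (0:ℝ)..T, G2 t) + T * K := by
    rw [intervalIntegral.integral_add (htint2.const_mul _) intervalIntegrable_const,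
      intervalIntegral.integral_const_mul, intervalIntegral.integral_const, smul_eq_mul,
      sub_zero]
  -- nonnegativity facts
  have hG2nonneg : ∀ t, 0 ≤ G2 t := fun t =>
    MeasureTheory.integral_nonneg (fun x => sq_nonneg _)
  have hIG2 : 0 ≤ ∫ t in (0:ℝ)..T, G2 t :=
    intervalIntegral.integral_nonneg hT.le (fun t _ => hG2nonneg t)
  have hyT : 0 ≤ y T := by
    rw [hy T]
    have h1 : 0 ≤ ∫ x in Ω, ‖w T x‖^2 :=
      MeasureTheory.integral_nonneg (fun x => sq_nonneg _)
    have h2 : 0 ≤ ∫ x in Ω, fnorm (gradMat (w T) x)^2 :=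
      MeasureTheory.integral_nonneg (fun x => sq_nonneg _)
    have : (0:ℝ) ≤ Cs^4 * δ^2 / μ^2 := by positivity
    nlinarith
  -- main unaveraged bound
  have hmain : (∫ t in (0:ℝ)..T, ((ν/2) * G2 t + c * G3 t)) ≤ T * K + y 0 / 2 := by
    have hlhs : (∫ t in (0:ℝ)..T, ((ν/2) * G2 t + c * G3 t))
        = (ν/2) * (∫ t in (0:ℝ)..T, G2 t) + c * (∫ t in (0:ℝ)..T, G3 t) := by
      rw [intervalIntegral.integral_add (htint2.const_mul _) (htint3.const_mul _),
        intervalIntegral.integral_const_mul, intervalIntegral.integral_const_mul]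
    rw [hlhs]
    rw [hlin] at hftc
    rw [hIFval] at hIF
    nlinarith [mul_nonneg hν.le hIG2]
  -- averaging
  have hVT : 0 < (volume Ω).toReal * T := mul_pos hΩpos hT
  have hconst : (∫ t in (0:ℝ)..T, K) = T * K := by
    rw [intervalIntegral.integral_const, smul_eq_mul, sub_zero]
  rw [hconst]
  have := mul_le_mul_of_nonneg_left hmain (le_of_lt (one_div_pos.mpr hVT))
  calc (1 / ((volume Ω).toReal * T)) * ∫ t in (0:ℝ)..T, ((ν/2) * G2 t + c * G3 t)
      ≤ (1 / ((volume Ω).toReal * T)) * (T * K + y 0 / 2) := this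
    _ = (1 / ((volume Ω).toReal * T)) * (T * K)
        + (1 / (2 * (volume Ω).toReal * T)) * y 0 := by
      field_simp
end
end
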